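/- Let Ω ⊆ ℝⁿ be open and let (Aₘ)_{m∈ℕ} be an increasing sequence of subsets of Ω (Aₘ ⊆ A_{m+1} for all m). Then lim_{m→∞} cap_{p,ϑ}(Aₘ, Ω) = cap_{p,ϑ}(⋃_{m=1}^∞ Aₘ, Ω). -/

import Mathlib

open MeasureTheory Metric Set Filter ENNReal

noncomputable section

/-- The weighted variable exponent modular `ρ_{p,ϑ,A}(g) = ∫_A |g|^{p(x)} ϑ(x) dx`. -/
def rhoMod {n : ℕ} (p ϑ : EuclideanSpace ℝ (Fin n) → ℝ)
    (A : Set (EuclideanSpace ℝ (Fin n))) (g : EuclideanSpace ℝ (Fin n) → ℝ) : ℝ≥0∞ :=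
  ∫⁻ x in A, ENNReal.ofReal (|g x| ^ p x * ϑ x)

/-- Relative `(p(·),ϑ)`-capacity of a compact set `K` with respect to an open set `Ω`:
the infimum of `ρ_{p,ϑ,Ω}(‖Df‖)` over `C¹` functions with compact support contained in `Ω`
which are `≥ 1` on `K` (with `sInf ∅ = ∞`). -/
def relCapK {n : ℕ} (p ϑ : EuclideanSpace ℝ (Fin n) → ℝ)
    (K Ω : Set (EuclideanSpace ℝ (Fin n))) : ℝ≥0∞ :=
  sInf ((fun f => rhoMod p ϑ Ω fun x => ‖fderiv ℝ f x‖) ''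
    {f : EuclideanSpace ℝ (Fin n) → ℝ |
      ContDiff ℝ 1 f ∧ IsCompact (tsupport f) ∧ tsupport f ⊆ Ω ∧ ∀ x ∈ K, 1 ≤ f x})

/-- Relative capacity of an open subset `U ⊆ Ω`. -/
def relCapO {n : ℕ} (p ϑ : EuclideanSpace ℝ (Fin n) → ℝ)
    (U Ω : Set (EuclideanSpace ℝ (Fin n))) : ℝ≥0∞ :=
  ⨆ (K : Set (EuclideanSpace ℝ (Fin n))) (_ : IsCompact K ∧ K ⊆ U), relCapK p ϑ K Ω

/-- Relative capacity of an arbitrary subset `A ⊆ Ω`. -/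
def relCap {n : ℕ} (p ϑ : EuclideanSpace ℝ (Fin n) → ℝ)
    (A Ω : Set (EuclideanSpace ℝ (Fin n))) : ℝ≥0∞ :=
  ⨅ (U : Set (EuclideanSpace ℝ (Fin n))) (_ : IsOpen U ∧ A ⊆ U ∧ U ⊆ Ω), relCapO p ϑ U Ω

/-- The Sobolev `(p(·),ϑ)`-capacity of `A ⊆ ℝⁿ`. -/
def sobCap {n : ℕ} (p ϑ : EuclideanSpace ℝ (Fin n) → ℝ)
    (A : Set (EuclideanSpace ℝ (Fin n))) : ℝ≥0∞ :=
  sInf ((fun f => ∫⁻ x, ENNReal.ofReal ((|f x| ^ p x + ‖fderiv ℝ f x‖ ^ p x) * ϑ x)) ''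
    {f : EuclideanSpace ℝ (Fin n) → ℝ |
      ContDiff ℝ 1 f ∧ ∃ U, IsOpen U ∧ A ⊆ U ∧ ∀ x ∈ U, 1 ≤ f x})

/-- The weighted measure `μ_ϑ(A) = ∫_A ϑ(x) dx`. -/
def muW {n : ℕ} (ϑ : EuclideanSpace ℝ (Fin n) → ℝ)
    (A : Set (EuclideanSpace ℝ (Fin n))) : ℝ≥0∞ :=
  ∫⁻ x in A, ENNReal.ofReal (ϑ x)

/-- `μ_ϑ` is doubling with constant `cd`. -/
def DoublingW {n : ℕ} (ϑ : EuclideanSpace ℝ (Fin n) → ℝ) (cd : ℝ) : Prop :=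
  1 ≤ cd ∧ ∀ (x : EuclideanSpace ℝ (Fin n)) (r : ℝ), 0 < r →
    muW ϑ (ball x (2 * r)) ≤ ENNReal.ofReal cd * muW ϑ (ball x r)

/-- Poincaré hypothesis with constant `c` for the weight `ϑ`. -/
def PoincareHyp {n : ℕ} (ϑ : EuclideanSpace ℝ (Fin n) → ℝ) (c : ℝ) : Prop :=
  ∀ Ω : Set (EuclideanSpace ℝ (Fin n)), IsOpen Ω → Bornology.IsBounded Ω →
    ∀ f : EuclideanSpace ℝ (Fin n) → ℝ, ContDiff ℝ 1 f → IsCompact (tsupport f) →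
      tsupport f ⊆ Ω →
      ∫ x in Ω, |f x| * ϑ x ≤ c * diam Ω * ∫ x in Ω, ‖fderiv ℝ f x‖ * ϑ x

/-- Embedding hypothesis `L^{p(·)}_ϑ(Ω) ↪ L¹_ϑ(Ω)` with constants `c₁ Ω`. -/
def EmbeddingHyp {n : ℕ} (p ϑ : EuclideanSpace ℝ (Fin n) → ℝ)
    (c₁ : Set (EuclideanSpace ℝ (Fin n)) → ℝ) : Prop :=
  ∀ Ω : Set (EuclideanSpace ℝ (Fin n)), IsOpen Ω → Bornology.IsBounded Ω →
    0 < c₁ Ω ∧ ∀ g : EuclideanSpace ℝ (Fin n) → ℝ, Measurable g → 1 ≤ rhoMod p ϑ Ω g →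
      (∫⁻ x in Ω, ENNReal.ofReal (|g x| * ϑ x)) ≤ ENNReal.ofReal (c₁ Ω) * rhoMod p ϑ Ω g

/-- The Wiener sum `W^{sum}_{p,ϑ}(A,x₀)`. -/
def wienerSum {n : ℕ} (p ϑ : EuclideanSpace ℝ (Fin n) → ℝ)
    (A : Set (EuclideanSpace ℝ (Fin n))) (x₀ : EuclideanSpace ℝ (Fin n)) : ℝ≥0∞ :=
  ∑' i : ℕ,
    (relCap p ϑ (A ∩ ball x₀ ((2 : ℝ) ^ (-(i : ℤ)))) (ball x₀ ((2 : ℝ) ^ (1 - (i : ℤ)))) /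
        relCap p ϑ (ball x₀ ((2 : ℝ) ^ (-(i : ℤ)))) (ball x₀ ((2 : ℝ) ^ (1 - (i : ℤ))))) ^
      (1 / (p x₀ - 1))

/-- The Wiener type integral `W_{p,ϑ}(A,x₀)`. -/
def wienerInt {n : ℕ} (p ϑ : EuclideanSpace ℝ (Fin n) → ℝ)
    (A : Set (EuclideanSpace ℝ (Fin n))) (x₀ : EuclideanSpace ℝ (Fin n)) : ℝ≥0∞ :=
  ∫⁻ r in Set.Ioo (0 : ℝ) 1,
    (relCap p ϑ (A ∩ ball x₀ r) (ball x₀ (2 * r)) /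
        relCap p ϑ (ball x₀ r) (ball x₀ (2 * r))) ^ (1 / (p x₀ - 1)) / ENNReal.ofReal r


section Aux

open intervalIntegral

variable {n : ℕ}


lemma exists_smooth_ramp (ε : ℝ) (hε : 0 < ε) :
    ∃ (φ D : ℝ → ℝ), ContDiff ℝ 1 φ ∧ (∀ t, HasDerivAt φ (D t) t) ∧
      (∀ t, 0 ≤ D t) ∧ (∀ t, D t ≤ 1) ∧
      (∀ t, t ≤ 0 → φ t = 0) ∧ (∀ t, 0 ≤ φ t) ∧ (∀ t, φ t ≤ max t 0) ∧
      (∀ t, t - ε ≤ φ t) := by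
  set ψ : ℝ → ℝ := fun s => Real.smoothTransition (s / ε) with hψ
  have hψc : Continuous ψ :=
    Real.smoothTransition.continuous.comp (continuous_id.div_const ε)
  have hψ0 : ∀ s, s ≤ 0 → ψ s = 0 := fun s hs =>
    Real.smoothTransition.zero_of_nonpos (div_nonpos_of_nonpos_of_nonneg hs hε.le)
  have hψ1 : ∀ s, ε ≤ s → ψ s = 1 := fun s hs =>
    Real.smoothTransition.one_of_one_le ((one_le_div hε).2 hs)
  have hψnn : ∀ s, 0 ≤ ψ s := fun s => Real.smoothTransition.nonneg _
  have hψle : ∀ s, ψ s ≤ 1 := fun s => Real.smoothTransition.le_one _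
  have hzero : ∀ t, t ≤ 0 → (∫ s in (0:ℝ)..t, ψ s) = 0 := by
    intro t ht
    rw [integral_symm]
    have h : ∫ s in t..(0:ℝ), ψ s = ∫ s in t..(0:ℝ), (0:ℝ) := by
      apply integral_congr
      intro s hs
      rw [uIcc_of_le ht] at hs
      exact hψ0 s hs.2
    rw [h, intervalIntegral.integral_zero, neg_zero]
  have hnn : ∀ t, 0 ≤ ∫ s in (0:ℝ)..t, ψ s := by
    intro t
    rcases le_or_gt t 0 with ht | ht
    · rw [hzero t ht]
    · exact integral_nonneg ht.le fun u _ => hψnn u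
  refine ⟨fun t => ∫ s in (0:ℝ)..t, ψ s, ψ, ?_, ?_, hψnn, hψle, hzero, hnn, ?_, ?_⟩
  · have hd : ∀ t, HasDerivAt (fun u => ∫ s in (0:ℝ)..u, ψ s) (ψ t) t := fun t =>
      (hψc.integral_hasStrictDerivAt 0 t).hasDerivAt
    rw [contDiff_one_iff_deriv]
    refine ⟨fun t => (hd t).differentiableAt, ?_⟩
    have : deriv (fun u => ∫ s in (0:ℝ)..u, ψ s) = ψ := funext fun t => (hd t).deriv
    rw [this]; exact hψc
  · exact fun t => (hψc.integral_hasStrictDerivAt 0 t).hasDerivAt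
  · intro t
    show (∫ s in (0:ℝ)..t, ψ s) ≤ max t 0
    rcases le_or_gt t 0 with ht | ht
    · rw [hzero t ht]; exact le_max_right _ _
    · calc ∫ s in (0:ℝ)..t, ψ s ≤ ∫ s in (0:ℝ)..t, (1:ℝ) := by
            apply integral_mono_on ht.le (hψc.intervalIntegrable 0 t)
              (continuous_const.intervalIntegrable 0 t)
            intro s _; exact hψle s
        _ = t := by simp
        _ ≤ max t 0 := le_max_left _ _
  · intro t
    rcases le_or_gt t ε with ht | ht
    · have := hnn t; linarith
    · have hsplit : (∫ s in (0:ℝ)..ε, ψ s) + ∫ s in ε..t, ψ s = ∫ s in (0:ℝ)..t, ψ s :=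
        integral_add_adjacent_intervals (hψc.intervalIntegrable 0 ε)
          (hψc.intervalIntegrable ε t)
      have h1 : 0 ≤ ∫ s in (0:ℝ)..ε, ψ s := integral_nonneg hε.le fun u _ => hψnn u
      have h2 : ∫ s in ε..t, ψ s = t - ε := by
        have h : ∫ s in ε..t, ψ s = ∫ s in ε..t, (1:ℝ) := by
          apply integral_congr
          intro s hs
          rw [uIcc_of_le ht.le] at hs
          exact hψ1 s hs.1
        rw [h]; simp
      show t - ε ≤ ∫ s in (0:ℝ)..t, ψ s
      linarith


lemma measurable_rpow_of_nonneg {α : Type*} [MeasurableSpace α] {B q : α → ℝ}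
    (hB : Measurable B) (hBnn : ∀ x, 0 ≤ B x) (hq : Measurable q) :
    Measurable fun x => B x ^ q x := by
  have heq : (fun x => B x ^ q x) = fun x =>
      if B x = 0 then (if q x = 0 then 1 else 0)
      else Real.exp (Real.log (B x) * q x) := by
    funext x
    rcases eq_or_lt_of_le (hBnn x) with h0 | h0
    · rw [if_pos h0.symm, ← h0]
      rcases eq_or_ne (q x) 0 with hq0 | hq0
      · rw [if_pos hq0, hq0, Real.rpow_zero]
      · rw [if_neg hq0, Real.zero_rpow hq0]
    · rw [if_neg (ne_of_gt h0), Real.rpow_def_of_pos h0]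
  rw [heq]
  exact Measurable.ite (hB (measurableSet_singleton 0))
    (Measurable.ite (hq (measurableSet_singleton 0)) measurable_const measurable_const)
    (Real.measurable_exp.comp ((Real.measurable_log.comp hB).mul hq))

lemma mem_rho_le {p ϑ : EuclideanSpace ℝ (Fin n) → ℝ} {K Ω : Set (EuclideanSpace ℝ (Fin n))}
    {h : EuclideanSpace ℝ (Fin n) → ℝ}
    (hmem : ContDiff ℝ 1 h ∧ IsCompact (tsupport h) ∧ tsupport h ⊆ Ω ∧ ∀ x ∈ K, 1 ≤ h x) :
    relCapK p ϑ K Ω ≤ rhoMod p ϑ Ω (fun x => ‖fderiv ℝ h x‖) :=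
  sInf_le (Set.mem_image_of_mem _ hmem)

lemma core_ineq (p ϑ : EuclideanSpace ℝ (Fin n) → ℝ) (hp : Measurable p)
    (hϑnn : ∀ x, 0 ≤ ϑ x) (hϑm : AEMeasurable ϑ (volume : Measure (EuclideanSpace ℝ (Fin n))))
    (P : ℝ) (hq1 : ∀ᵐ x ∂(volume : Measure (EuclideanSpace ℝ (Fin n))), 1 ≤ p x)
    (hqP : ∀ᵐ x ∂(volume : Measure (EuclideanSpace ℝ (Fin n))), p x ≤ P)
    (K₁ K₂ Ω : Set (EuclideanSpace ℝ (Fin n)))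
    (f g : EuclideanSpace ℝ (Fin n) → ℝ)
    (hf : ContDiff ℝ 1 f ∧ IsCompact (tsupport f) ∧ tsupport f ⊆ Ω ∧ ∀ x ∈ K₁, 1 ≤ f x)
    (hg : ContDiff ℝ 1 g ∧ IsCompact (tsupport g) ∧ tsupport g ⊆ Ω ∧ ∀ x ∈ K₂, 1 ≤ g x)
    (c : ℝ) (hc : 1 < c) :
    relCapK p ϑ (K₁ ∪ K₂) Ω + relCapK p ϑ (K₁ ∩ K₂) Ω ≤
      rhoMod p ϑ Ω (fun x => ‖fderiv ℝ f x‖) +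
        ENNReal.ofReal (c ^ P) * rhoMod p ϑ Ω (fun x => ‖fderiv ℝ g x‖) := by
  have hc0 : (0:ℝ) < c := lt_trans one_pos hc
  obtain ⟨φ, D, hφcd, hφd, hD0, hD1, hφ0, hφnn, hφle, hφge⟩ :=
    exists_smooth_ramp (c - 1) (by linarith)
  set u : EuclideanSpace ℝ (Fin n) → ℝ := fun x => c * g x - f x with hu_def
  set h₁ : EuclideanSpace ℝ (Fin n) → ℝ := fun x => f x + φ (u x) with h1_def
  set h₂ : EuclideanSpace ℝ (Fin n) → ℝ := fun x => c * g x - φ (u x) with h2_def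
  -- differentiability facts
  have hfd : ∀ x, HasFDerivAt f (fderiv ℝ f x) x := fun x =>
    (hf.1.differentiable one_ne_zero x).hasFDerivAt
  have hgd : ∀ x, HasFDerivAt g (fderiv ℝ g x) x := fun x =>
    (hg.1.differentiable one_ne_zero x).hasFDerivAt
  have hcgd : ∀ x, HasFDerivAt (fun y => c * g y) (c • fderiv ℝ g x) x := fun x =>
    (hgd x).const_mul c
  have hud : ∀ x, HasFDerivAt u (c • fderiv ℝ g x - fderiv ℝ f x) x := fun x =>
    (hcgd x).sub (hfd x)
  have hcompd : ∀ x, HasFDerivAt (fun y => φ (u y))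
      (D (u x) • (c • fderiv ℝ g x - fderiv ℝ f x)) x := fun x =>
    (hφd (u x)).comp_hasFDerivAt x (hud x)
  have h1d : ∀ x, HasFDerivAt h₁
      (fderiv ℝ f x + D (u x) • (c • fderiv ℝ g x - fderiv ℝ f x)) x := fun x =>
    (hfd x).add (hcompd x)
  have h2d : ∀ x, HasFDerivAt h₂
      (c • fderiv ℝ g x - D (u x) • (c • fderiv ℝ g x - fderiv ℝ f x)) x := fun x =>
    (hcgd x).sub (hcompd x)
  have hucd : ContDiff ℝ 1 u := (contDiff_const.mul hg.1).sub hf.1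
  have h1cd : ContDiff ℝ 1 h₁ := hf.1.add (hφcd.comp hucd)
  have h2cd : ContDiff ℝ 1 h₂ := (contDiff_const.mul hg.1).sub (hφcd.comp hucd)
  -- norm bounds on derivatives
  have hnorm1 : ∀ x, ‖fderiv ℝ h₁ x‖ ≤
      (1 - D (u x)) * ‖fderiv ℝ f x‖ + D (u x) * (c * ‖fderiv ℝ g x‖) := by
    intro x
    set t := D (u x)
    rw [(h1d x).fderiv]
    have key : fderiv ℝ f x + t • (c • fderiv ℝ g x - fderiv ℝ f x)
        = (1 - t) • fderiv ℝ f x + (t * c) • fderiv ℝ g x := by module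
    rw [key]
    calc ‖(1 - t) • fderiv ℝ f x + (t * c) • fderiv ℝ g x‖
        ≤ ‖(1 - t) • fderiv ℝ f x‖ + ‖(t * c) • fderiv ℝ g x‖ := norm_add_le _ _
      _ = |1 - t| * ‖fderiv ℝ f x‖ + |t * c| * ‖fderiv ℝ g x‖ := by
          rw [norm_smul, norm_smul, Real.norm_eq_abs, Real.norm_eq_abs]
      _ = (1 - t) * ‖fderiv ℝ f x‖ + t * (c * ‖fderiv ℝ g x‖) := by
          rw [abs_of_nonneg (by have := hD1 (u x); linarith),
            abs_of_nonneg (mul_nonneg (hD0 (u x)) hc0.le)]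
          ring
  have hnorm2 : ∀ x, ‖fderiv ℝ h₂ x‖ ≤
      D (u x) * ‖fderiv ℝ f x‖ + (1 - D (u x)) * (c * ‖fderiv ℝ g x‖) := by
    intro x
    set t := D (u x)
    rw [(h2d x).fderiv]
    have key : c • fderiv ℝ g x - t • (c • fderiv ℝ g x - fderiv ℝ f x)
        = t • fderiv ℝ f x + ((1 - t) * c) • fderiv ℝ g x := by module
    rw [key]
    calc ‖t • fderiv ℝ f x + ((1 - t) * c) • fderiv ℝ g x‖
        ≤ ‖t • fderiv ℝ f x‖ + ‖((1 - t) * c) • fderiv ℝ g x‖ := norm_add_le _ _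
      _ = |t| * ‖fderiv ℝ f x‖ + |(1 - t) * c| * ‖fderiv ℝ g x‖ := by
          rw [norm_smul, norm_smul, Real.norm_eq_abs, Real.norm_eq_abs]
      _ = t * ‖fderiv ℝ f x‖ + (1 - t) * (c * ‖fderiv ℝ g x‖) := by
          rw [abs_of_nonneg (hD0 (u x)),
            abs_of_nonneg (mul_nonneg (by have := hD1 (u x); linarith) hc0.le)]
          ring
  -- admissibility of h₁ for K₁ ∪ K₂
  have hsupp1 : tsupport h₁ ⊆ tsupport f ∪ tsupport g := by
    rw [tsupport, tsupport, tsupport, ← closure_union]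
    apply closure_mono
    intro x hx
    by_contra hxn
    simp only [Set.mem_union, Function.mem_support, not_or, not_not] at hxn
    apply hx
    show h₁ x = 0
    simp only [h1_def, hu_def, hxn.1, hxn.2, mul_zero, sub_zero, zero_add]
    exact hφ0 0 le_rfl
  have hsupp2 : tsupport h₂ ⊆ tsupport f ∪ tsupport g := by
    rw [tsupport, tsupport, tsupport, ← closure_union]
    apply closure_mono
    intro x hx
    by_contra hxn
    simp only [Set.mem_union, Function.mem_support, not_or, not_not] at hxn
    apply hx
    show h₂ x = 0
    simp only [h2_def, hu_def, hxn.1, hxn.2, mul_zero, sub_zero, zero_sub]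
    rw [hφ0 0 le_rfl, neg_zero]
  have hK1 : IsCompact (tsupport f ∪ tsupport g) := hf.2.1.union hg.2.1
  have hΩ1 : tsupport f ∪ tsupport g ⊆ Ω := Set.union_subset hf.2.2.1 hg.2.2.1
  have hmem1 : ContDiff ℝ 1 h₁ ∧ IsCompact (tsupport h₁) ∧ tsupport h₁ ⊆ Ω ∧
      ∀ x ∈ K₁ ∪ K₂, 1 ≤ h₁ x := by
    refine ⟨h1cd, hK1.of_isClosed_subset (isClosed_tsupport _) hsupp1,
      hsupp1.trans hΩ1, ?_⟩
    rintro x (hx | hx)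
    · have h1 : 1 ≤ f x := hf.2.2.2 x hx
      have h2 : 0 ≤ φ (u x) := hφnn _
      show 1 ≤ f x + φ (u x)
      linarith
    · have h1 : 1 ≤ g x := hg.2.2.2 x hx
      have h2 : u x - (c - 1) ≤ φ (u x) := hφge _
      have h3 : c ≤ c * g x := by nlinarith
      show 1 ≤ f x + φ (u x)
      simp only [hu_def] at h2
      linarith
  have hmem2 : ContDiff ℝ 1 h₂ ∧ IsCompact (tsupport h₂) ∧ tsupport h₂ ⊆ Ω ∧
      ∀ x ∈ K₁ ∩ K₂, 1 ≤ h₂ x := by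
    refine ⟨h2cd, hK1.of_isClosed_subset (isClosed_tsupport _) hsupp2,
      hsupp2.trans hΩ1, ?_⟩
    rintro x ⟨hx1, hx2⟩
    have h1 : 1 ≤ f x := hf.2.2.2 x hx1
    have h2 : 1 ≤ g x := hg.2.2.2 x hx2
    have h3 : c ≤ c * g x := by nlinarith
    show 1 ≤ c * g x - φ (u x)
    rcases le_or_gt (u x) 0 with hu0 | hu0
    · rw [hφ0 _ hu0]; linarith
    · have h4 : φ (u x) ≤ max (u x) 0 := hφle _
      rw [max_eq_left hu0.le] at h4
      simp only [hu_def] at h4 hu0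
      linarith
  -- integral estimates
  have hcP : (0:ℝ) ≤ c ^ P := Real.rpow_nonneg hc0.le P
  have hmeas : ∀ (h : EuclideanSpace ℝ (Fin n) → ℝ), ContDiff ℝ 1 h →
      AEMeasurable (fun x => ENNReal.ofReal (‖fderiv ℝ h x‖ ^ p x * ϑ x))
        ((volume : Measure (EuclideanSpace ℝ (Fin n))).restrict Ω) := by
    intro h hh
    apply ENNReal.measurable_ofReal.comp_aemeasurable
    exact ((measurable_rpow_of_nonneg ((hh.continuous_fderiv one_ne_zero).norm.measurable)
      (fun x => norm_nonneg _) hp).aemeasurable.mul hϑm.restrict)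
  have hrho : ∀ (h : EuclideanSpace ℝ (Fin n) → ℝ),
      rhoMod p ϑ Ω (fun x => ‖fderiv ℝ h x‖) =
        ∫⁻ x in Ω, ENNReal.ofReal (‖fderiv ℝ h x‖ ^ p x * ϑ x) := by
    intro h
    simp only [rhoMod, abs_norm]
  have hpoint : ∀ᵐ x ∂((volume : Measure (EuclideanSpace ℝ (Fin n))).restrict Ω),
      ENNReal.ofReal (‖fderiv ℝ h₁ x‖ ^ p x * ϑ x) +
        ENNReal.ofReal (‖fderiv ℝ h₂ x‖ ^ p x * ϑ x) ≤
      ENNReal.ofReal (‖fderiv ℝ f x‖ ^ p x * ϑ x) +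
        ENNReal.ofReal (c ^ P) * ENNReal.ofReal (‖fderiv ℝ g x‖ ^ p x * ϑ x) := by
    filter_upwards [ae_restrict_of_ae hq1, ae_restrict_of_ae hqP] with x hx1 hxP
    set q := p x
    set t := D (u x)
    set a := ‖fderiv ℝ f x‖
    set b := ‖fderiv ℝ g x‖
    have ht0 : 0 ≤ t := hD0 _
    have ht1 : t ≤ 1 := hD1 _
    have ha : 0 ≤ a := norm_nonneg _
    have hb : 0 ≤ b := norm_nonneg _
    have hcb : 0 ≤ c * b := mul_nonneg hc0.le hb
    have hq0 : (0:ℝ) ≤ q := by linarith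
    have cvx := convexOn_rpow hx1
    have e1 : ((1 - t) * a + t * (c * b)) ^ q ≤ (1 - t) * a ^ q + t * (c * b) ^ q := by
      have := cvx.2 (Set.mem_Ici.2 ha) (Set.mem_Ici.2 hcb) (by linarith : (0:ℝ) ≤ 1 - t)
        ht0 (by ring : (1 - t) + t = 1)
      simpa [smul_eq_mul] using this
    have e2 : (t * a + (1 - t) * (c * b)) ^ q ≤ t * a ^ q + (1 - t) * (c * b) ^ q := by
      have := cvx.2 (Set.mem_Ici.2 ha) (Set.mem_Ici.2 hcb) ht0
        (by linarith : (0:ℝ) ≤ 1 - t) (by ring : t + (1 - t) = 1)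
      simpa [smul_eq_mul] using this
    have e3 : (c * b) ^ q ≤ c ^ P * b ^ q := by
      rw [Real.mul_rpow hc0.le hb]
      exact mul_le_mul_of_nonneg_right (Real.rpow_le_rpow_of_exponent_le hc.le hxP)
        (Real.rpow_nonneg hb q)
    have r1 : ‖fderiv ℝ h₁ x‖ ^ q ≤ ((1 - t) * a + t * (c * b)) ^ q :=
      Real.rpow_le_rpow (norm_nonneg _) (hnorm1 x) hq0
    have r2 : ‖fderiv ℝ h₂ x‖ ^ q ≤ (t * a + (1 - t) * (c * b)) ^ q :=
      Real.rpow_le_rpow (norm_nonneg _) (hnorm2 x) hq0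
    have hsum : ‖fderiv ℝ h₁ x‖ ^ q + ‖fderiv ℝ h₂ x‖ ^ q ≤ a ^ q + c ^ P * b ^ q := by
      nlinarith [Real.rpow_nonneg hb q]
    have hϑx : 0 ≤ ϑ x := hϑnn x
    calc ENNReal.ofReal (‖fderiv ℝ h₁ x‖ ^ q * ϑ x) +
          ENNReal.ofReal (‖fderiv ℝ h₂ x‖ ^ q * ϑ x)
        = ENNReal.ofReal ((‖fderiv ℝ h₁ x‖ ^ q + ‖fderiv ℝ h₂ x‖ ^ q) * ϑ x) := by
          rw [add_mul, ENNReal.ofReal_add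
            (mul_nonneg (Real.rpow_nonneg (norm_nonneg _) q) hϑx)
            (mul_nonneg (Real.rpow_nonneg (norm_nonneg _) q) hϑx)]
      _ ≤ ENNReal.ofReal ((a ^ q + c ^ P * b ^ q) * ϑ x) :=
          ENNReal.ofReal_le_ofReal (mul_le_mul_of_nonneg_right hsum hϑx)
      _ = ENNReal.ofReal (a ^ q * ϑ x) +
            ENNReal.ofReal (c ^ P) * ENNReal.ofReal (b ^ q * ϑ x) := by
          rw [add_mul, ENNReal.ofReal_add (mul_nonneg (Real.rpow_nonneg ha q) hϑx)
            (mul_nonneg (mul_nonneg hcP (Real.rpow_nonneg hb q)) hϑx),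
            mul_assoc, ENNReal.ofReal_mul hcP]
  calc relCapK p ϑ (K₁ ∪ K₂) Ω + relCapK p ϑ (K₁ ∩ K₂) Ω
      ≤ rhoMod p ϑ Ω (fun x => ‖fderiv ℝ h₁ x‖) +
          rhoMod p ϑ Ω (fun x => ‖fderiv ℝ h₂ x‖) :=
        add_le_add (mem_rho_le hmem1) (mem_rho_le hmem2)
    _ = ∫⁻ x in Ω, (ENNReal.ofReal (‖fderiv ℝ h₁ x‖ ^ p x * ϑ x) +
          ENNReal.ofReal (‖fderiv ℝ h₂ x‖ ^ p x * ϑ x)) := by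
        rw [hrho, hrho, lintegral_add_left' (hmeas h₁ h1cd)]
    _ ≤ ∫⁻ x in Ω, (ENNReal.ofReal (‖fderiv ℝ f x‖ ^ p x * ϑ x) +
          ENNReal.ofReal (c ^ P) * ENNReal.ofReal (‖fderiv ℝ g x‖ ^ p x * ϑ x)) :=
        lintegral_mono_ae hpoint
    _ = rhoMod p ϑ Ω (fun x => ‖fderiv ℝ f x‖) +
          ENNReal.ofReal (c ^ P) * rhoMod p ϑ Ω (fun x => ‖fderiv ℝ g x‖) := by
        rw [lintegral_add_left' (hmeas f hf.1), lintegral_const_mul' _ _ ENNReal.ofReal_ne_top,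
          hrho, hrho]


lemma capK_mono {p ϑ : EuclideanSpace ℝ (Fin n) → ℝ} {K K' Ω : Set (EuclideanSpace ℝ (Fin n))}
    (h : K ⊆ K') : relCapK p ϑ K Ω ≤ relCapK p ϑ K' Ω := by
  apply sInf_le_sInf
  apply Set.image_mono
  intro f hf
  exact ⟨hf.1, hf.2.1, hf.2.2.1, fun x hx => hf.2.2.2 x (h hx)⟩

lemma exists_admissible_lt {p ϑ : EuclideanSpace ℝ (Fin n) → ℝ}
    {K Ω : Set (EuclideanSpace ℝ (Fin n))} {C : ℝ≥0∞} (h : relCapK p ϑ K Ω < C) :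
    ∃ f : EuclideanSpace ℝ (Fin n) → ℝ, (ContDiff ℝ 1 f ∧ IsCompact (tsupport f) ∧ tsupport f ⊆ Ω ∧ ∀ x ∈ K, 1 ≤ f x) ∧
      rhoMod p ϑ Ω (fun x => ‖fderiv ℝ f x‖) < C := by
  obtain ⟨y, hy, hylt⟩ := sInf_lt_iff.1 h
  obtain ⟨f, hf, rfl⟩ := hy
  exact ⟨f, hf, hylt⟩

lemma capK_strong (p ϑ : EuclideanSpace ℝ (Fin n) → ℝ) (hp : Measurable p)
    (hϑnn : ∀ x, 0 ≤ ϑ x) (hϑm : AEMeasurable ϑ (volume : Measure (EuclideanSpace ℝ (Fin n))))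
    (P : ℝ) (hP1 : 1 ≤ P)
    (hq1 : ∀ᵐ x ∂(volume : Measure (EuclideanSpace ℝ (Fin n))), 1 ≤ p x)
    (hqP : ∀ᵐ x ∂(volume : Measure (EuclideanSpace ℝ (Fin n))), p x ≤ P)
    (K₁ K₂ Ω : Set (EuclideanSpace ℝ (Fin n))) :
    relCapK p ϑ (K₁ ∪ K₂) Ω + relCapK p ϑ (K₁ ∩ K₂) Ω ≤
      relCapK p ϑ K₁ Ω + relCapK p ϑ K₂ Ω := by
  by_cases h1 : relCapK p ϑ K₁ Ω = ⊤
  · rw [h1]; exact le_top.trans_eq (by rw [top_add])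
  by_cases h2 : relCapK p ϑ K₂ Ω = ⊤
  · rw [h2]; exact le_top.trans_eq (by rw [add_top])
  refine ENNReal.le_of_forall_pos_le_add fun η hη hfin => ?_
  have hη0 : (0:ℝ) < (η:ℝ) := hη
  set δ : ℝ := (η:ℝ)/4 with hδdef
  have hδ0 : 0 < δ := by positivity
  have hδne : ENNReal.ofReal δ ≠ 0 := (ENNReal.ofReal_pos.2 hδ0).ne'
  obtain ⟨f, hfadm, hflt⟩ := exists_admissible_lt (ENNReal.lt_add_right h1 hδne)
  obtain ⟨g, hgadm, hglt⟩ := exists_admissible_lt (ENNReal.lt_add_right h2 hδne)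
  set G := rhoMod p ϑ Ω (fun x => ‖fderiv ℝ g x‖) with hGdef
  have hGfin : G ≠ ⊤ := by
    intro hG
    rw [hG] at hglt
    exact not_top_lt hglt
  have hGnn : (0:ℝ) ≤ G.toReal := ENNReal.toReal_nonneg
  set θ : ℝ := δ / (G.toReal + 1) with hθdef
  have hθ0 : 0 < θ := by positivity
  have hP0 : (0:ℝ) < P := by linarith
  set c : ℝ := (1 + θ) ^ (1/P) with hcdef
  have h1θ : (0:ℝ) < 1 + θ := by linarith
  have hc : 1 < c := by
    rw [hcdef]
    rw [Real.one_lt_rpow_iff h1θ.le]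
    exact Or.inl ⟨by linarith, by positivity⟩
  have hcP : c ^ P = 1 + θ := by
    rw [hcdef, ← Real.rpow_mul h1θ.le, one_div, inv_mul_cancel₀ hP0.ne', Real.rpow_one]
  have hmain := core_ineq p ϑ hp hϑnn hϑm P hq1 hqP K₁ K₂ Ω f g hfadm hgadm c hc
  have hofθG : ENNReal.ofReal θ * G ≤ ENNReal.ofReal δ := by
    conv_lhs => rw [← ENNReal.ofReal_toReal hGfin]
    rw [← ENNReal.ofReal_mul hθ0.le]
    apply ENNReal.ofReal_le_ofReal
    rw [hθdef]
    rw [div_mul_eq_mul_div, div_le_iff₀ (by linarith)]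
    nlinarith
  calc relCapK p ϑ (K₁ ∪ K₂) Ω + relCapK p ϑ (K₁ ∩ K₂) Ω
      ≤ rhoMod p ϑ Ω (fun x => ‖fderiv ℝ f x‖) + ENNReal.ofReal (c ^ P) * G := hmain
    _ ≤ (relCapK p ϑ K₁ Ω + ENNReal.ofReal δ) + (G + ENNReal.ofReal θ * G) := by
        apply add_le_add hflt.le
        rw [hcP, ENNReal.ofReal_add one_pos.le hθ0.le, add_mul, ENNReal.ofReal_one, one_mul]
    _ ≤ (relCapK p ϑ K₁ Ω + ENNReal.ofReal δ) +
          ((relCapK p ϑ K₂ Ω + ENNReal.ofReal δ) + ENNReal.ofReal δ) :=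
        add_le_add_right (add_le_add hglt.le hofθG) _
    _ = (relCapK p ϑ K₁ Ω + relCapK p ϑ K₂ Ω) +
          (ENNReal.ofReal δ + ENNReal.ofReal δ + ENNReal.ofReal δ) := by ring
    _ ≤ (relCapK p ϑ K₁ Ω + relCapK p ϑ K₂ Ω) + η := by
        apply add_le_add_right
        rw [← ENNReal.ofReal_add hδ0.le hδ0.le, ← ENNReal.ofReal_add (by linarith) hδ0.le]
        calc ENNReal.ofReal (δ + δ + δ) ≤ ENNReal.ofReal (η:ℝ) :=
              ENNReal.ofReal_le_ofReal (by rw [hδdef]; linarith)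
          _ = (η : ℝ≥0∞) := ENNReal.ofReal_coe_nnreal

lemma le_capO {p ϑ : EuclideanSpace ℝ (Fin n) → ℝ} {K U Ω : Set (EuclideanSpace ℝ (Fin n))}
    (hK : IsCompact K) (hKU : K ⊆ U) : relCapK p ϑ K Ω ≤ relCapO p ϑ U Ω :=
  le_iSup₂ (f := fun (K : Set (EuclideanSpace ℝ (Fin n)))
    (_ : IsCompact K ∧ K ⊆ U) => relCapK p ϑ K Ω) K ⟨hK, hKU⟩

lemma capO_mono {p ϑ : EuclideanSpace ℝ (Fin n) → ℝ} {U V Ω : Set (EuclideanSpace ℝ (Fin n))}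
    (h : U ⊆ V) : relCapO p ϑ U Ω ≤ relCapO p ϑ V Ω := by
  apply iSup₂_le
  intro K hK
  exact le_capO hK.1 (hK.2.trans h)

lemma capO_strong (p ϑ : EuclideanSpace ℝ (Fin n) → ℝ) (hp : Measurable p)
    (hϑnn : ∀ x, 0 ≤ ϑ x) (hϑm : AEMeasurable ϑ (volume : Measure (EuclideanSpace ℝ (Fin n))))
    (P : ℝ) (hP1 : 1 ≤ P)
    (hq1 : ∀ᵐ x ∂(volume : Measure (EuclideanSpace ℝ (Fin n))), 1 ≤ p x)
    (hqP : ∀ᵐ x ∂(volume : Measure (EuclideanSpace ℝ (Fin n))), p x ≤ P)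
    (U V Ω : Set (EuclideanSpace ℝ (Fin n))) (hU : IsOpen U) (hV : IsOpen V) :
    relCapO p ϑ (U ∪ V) Ω + relCapO p ϑ (U ∩ V) Ω ≤
      relCapO p ϑ U Ω + relCapO p ϑ V Ω := by
  have key : ∀ K L : Set (EuclideanSpace ℝ (Fin n)), IsCompact K → K ⊆ U ∪ V →
      IsCompact L → L ⊆ U ∩ V →
      relCapK p ϑ K Ω + relCapK p ϑ L Ω ≤ relCapO p ϑ U Ω + relCapO p ϑ V Ω := by
    intro K L hK hKsub hL hLsub
    obtain ⟨K₁, K₂, hcK₁, hcK₂, hKU, hKV, rfl⟩ := hK.binary_compact_cover hU hV hKsub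
    calc relCapK p ϑ (K₁ ∪ K₂) Ω + relCapK p ϑ L Ω
        ≤ relCapK p ϑ ((K₁ ∪ L) ∪ (K₂ ∪ L)) Ω + relCapK p ϑ ((K₁ ∪ L) ∩ (K₂ ∪ L)) Ω := by
          apply add_le_add
          · apply capK_mono
            intro x hx
            rcases hx with hx | hx
            · exact Or.inl (Or.inl hx)
            · exact Or.inr (Or.inl hx)
          · exact capK_mono (Set.subset_inter Set.subset_union_right Set.subset_union_right)
      _ ≤ relCapK p ϑ (K₁ ∪ L) Ω + relCapK p ϑ (K₂ ∪ L) Ω :=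
          capK_strong p ϑ hp hϑnn hϑm P hP1 hq1 hqP _ _ Ω
      _ ≤ relCapO p ϑ U Ω + relCapO p ϑ V Ω := by
          apply add_le_add
          · exact le_capO (hcK₁.union hL)
              (Set.union_subset hKU (hLsub.trans Set.inter_subset_left))
          · exact le_capO (hcK₂.union hL)
              (Set.union_subset hKV (hLsub.trans Set.inter_subset_right))
  rw [relCapO, ENNReal.iSup_add]
  apply iSup_le
  intro K
  by_cases hK : IsCompact K ∧ K ⊆ U ∪ V
  · rw [iSup_pos hK, relCapO, ENNReal.add_iSup]
    apply iSup_le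
    intro L
    by_cases hL : IsCompact L ∧ L ⊆ U ∩ V
    · rw [iSup_pos hL]
      exact key K L hK.1 hK.2 hL.1 hL.2
    · rw [iSup_neg hL]
      simp only [bot_eq_zero, add_zero]
      exact le_trans (le_add_right le_rfl)
        (key K ∅ hK.1 hK.2 isCompact_empty (Set.empty_subset _))
  · rw [iSup_neg hK]
    simp only [bot_eq_zero, zero_add]
    exact le_add_right (capO_mono Set.inter_subset_left)

lemma cap_mono {p ϑ : EuclideanSpace ℝ (Fin n) → ℝ} {A B Ω : Set (EuclideanSpace ℝ (Fin n))}
    (h : A ⊆ B) : relCap p ϑ A Ω ≤ relCap p ϑ B Ω := by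
  apply le_iInf₂
  intro U hU
  exact iInf₂_le U ⟨hU.1, h.trans hU.2.1, hU.2.2⟩

lemma cap_le_capO {p ϑ : EuclideanSpace ℝ (Fin n) → ℝ}
    {A U Ω : Set (EuclideanSpace ℝ (Fin n))} (hU : IsOpen U) (hAU : A ⊆ U) (hUΩ : U ⊆ Ω) :
    relCap p ϑ A Ω ≤ relCapO p ϑ U Ω :=
  iInf₂_le U ⟨hU, hAU, hUΩ⟩

lemma capO_iUnion_incr {p ϑ : EuclideanSpace ℝ (Fin n) → ℝ}
    {Ω : Set (EuclideanSpace ℝ (Fin n))} (V : ℕ → Set (EuclideanSpace ℝ (Fin n)))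
    (hVo : ∀ m, IsOpen (V m)) (hVmono : Monotone V) :
    relCapO p ϑ (⋃ m, V m) Ω ≤ ⨆ m, relCapO p ϑ (V m) Ω := by
  apply iSup₂_le
  intro K hK
  obtain ⟨s, hs⟩ := hK.1.elim_finite_subcover V hVo hK.2
  have hsub : K ⊆ V (s.sup id) := by
    refine hs.trans (Set.iUnion₂_subset fun i hi => hVmono ?_)
    exact Finset.le_sup (f := id) hi
  exact (le_capO hK.1 hsub).trans (le_iSup (fun m => relCapO p ϑ (V m) Ω) (s.sup id))

end Aux

/-- For an increasing sequence of subsets of `Ω`, the relative capacities converge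
to the relative capacity of the union. -/
theorem stmt5 (n : ℕ) (hn : 1 ≤ n) (p ϑ : EuclideanSpace ℝ (Fin n) → ℝ)
    (hp : Measurable p)
    (hpm : 1 < essInf p (volume : Measure (EuclideanSpace ℝ (Fin n))))
    (hpb : Filter.IsBoundedUnder (· ≤ ·) (ae (volume : Measure (EuclideanSpace ℝ (Fin n)))) p)
    (hϑpos : ∀ x, 0 < ϑ x)
    (hϑloc : LocallyIntegrable ϑ (volume : Measure (EuclideanSpace ℝ (Fin n))))
    (Ω : Set (EuclideanSpace ℝ (Fin n))) (hΩ : IsOpen Ω) (A : ℕ → Set (EuclideanSpace ℝ (Fin n)))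
    (hAΩ : ∀ m, A m ⊆ Ω) (hinc : ∀ m, A m ⊆ A (m + 1)) :
    Filter.Tendsto (fun m => relCap p ϑ (A m) Ω) Filter.atTop
      (nhds (relCap p ϑ (⋃ m, A m) Ω)) := by
  classical
  have hϑm : AEMeasurable ϑ (volume : Measure (EuclideanSpace ℝ (Fin n))) :=
    hϑloc.aestronglyMeasurable.aemeasurable
  have hϑnn : ∀ x, 0 ≤ ϑ x := fun x => (hϑpos x).le
  have hbdd : IsBoundedUnder (fun x1 x2 => x1 ≥ x2)
      (ae (volume : Measure (EuclideanSpace ℝ (Fin n)))) p := by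
    by_contra hb
    have hS : {a : ℝ | ∀ᶠ x in ae (volume : Measure (EuclideanSpace ℝ (Fin n))), a ≤ p x}
        = ∅ := by
      rw [Set.eq_empty_iff_forall_notMem]
      intro a ha
      exact hb (isBoundedUnder_of_eventually_ge ha)
    have h0 : essInf p (volume : Measure (EuclideanSpace ℝ (Fin n))) = 0 := by
      rw [show essInf p (volume : Measure (EuclideanSpace ℝ (Fin n)))
        = liminf p (ae (volume : Measure (EuclideanSpace ℝ (Fin n)))) from rfl,
        liminf_eq, hS, Real.sSup_empty]
    rw [h0] at hpm
    norm_num at hpm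
  have hpm' : 1 < liminf p (ae (volume : Measure (EuclideanSpace ℝ (Fin n)))) := hpm
  have hae1 : ∀ᵐ x ∂(volume : Measure (EuclideanSpace ℝ (Fin n))), 1 ≤ p x := by
    filter_upwards [eventually_lt_of_lt_liminf hpm' hbdd] with x hx
    exact hx.le
  obtain ⟨P₀, hP₀⟩ := hpb
  set P := max P₀ 1 with hPdef
  have hP1 : 1 ≤ P := le_max_right _ _
  have haeP : ∀ᵐ x ∂(volume : Measure (EuclideanSpace ℝ (Fin n))), p x ≤ P := by
    filter_upwards [eventually_map.1 hP₀] with x hx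
    exact hx.trans (le_max_left _ _)
  have hcapmono : Monotone (fun m => relCap p ϑ (A m) Ω) :=
    monotone_nat_of_le_succ (fun m => cap_mono (hinc m))
  have hkey : (⨆ m, relCap p ϑ (A m) Ω) = relCap p ϑ (⋃ m, A m) Ω := by
    apply le_antisymm
    · exact iSup_le fun m => cap_mono (Set.subset_iUnion A m)
    · set L := ⨆ m, relCap p ϑ (A m) Ω with hL
      by_cases hLtop : L = ⊤
      · rw [hLtop]; exact le_top
      have hcapfin : ∀ m, relCap p ϑ (A m) Ω ≠ ⊤ := fun m =>
        ne_top_of_le_ne_top hLtop (le_iSup (fun m => relCap p ϑ (A m) Ω) m)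
      refine ENNReal.le_of_forall_pos_le_add fun η hη hfin => ?_
      set e : ℕ → ℝ≥0∞ := fun k => (η : ℝ≥0∞)/2/2^k with he
      have hepos : ∀ k, e k ≠ 0 := by
        intro k h
        rw [he] at h
        rcases ENNReal.div_eq_zero_iff.1 h with h' | h'
        · rcases ENNReal.div_eq_zero_iff.1 h' with h'' | h''
          · exact hη.ne' (by exact_mod_cast h'')
          · exact ENNReal.ofNat_ne_top h''
        · exact ENNReal.ofNat_ne_top (ENNReal.pow_eq_top_iff.1 h').1
      have hesum : ∀ m, ∑ k ∈ Finset.range (m+1), e k ≤ (η : ℝ≥0∞) := by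
        intro m
        calc ∑ k ∈ Finset.range (m+1), e k ≤ ∑' k, e k := ENNReal.sum_le_tsum _
          _ = (η:ℝ≥0∞) := by
              rw [he]
              have hfn : (fun k : ℕ => (η:ℝ≥0∞)/2/2^k) = fun k => (η:ℝ≥0∞)/2 * 2⁻¹^k := by
                funext k
                rw [div_eq_mul_inv ((η:ℝ≥0∞)/2), ENNReal.inv_pow]
              rw [hfn, ENNReal.tsum_mul_left, ENNReal.tsum_geometric,
                ENNReal.one_sub_inv_two, inv_inv]
              exact ENNReal.div_mul_cancel (by norm_num) ENNReal.ofNat_ne_top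
      have hchoose : ∀ m, ∃ U : Set (EuclideanSpace ℝ (Fin n)),
          (IsOpen U ∧ A m ⊆ U ∧ U ⊆ Ω) ∧ relCapO p ϑ U Ω ≤ relCap p ϑ (A m) Ω + e m := by
        intro m
        by_contra hcon
        push_neg at hcon
        have hge : relCap p ϑ (A m) Ω + e m ≤ relCap p ϑ (A m) Ω := by
          conv_rhs => rw [relCap]
          exact le_iInf fun U => le_iInf fun hU => (hcon U hU).le
        exact absurd hge (ENNReal.lt_add_right (hcapfin m) (hepos m)).not_ge
      choose U hUp hUcap using hchoose
      set W : ℕ → Set (EuclideanSpace ℝ (Fin n)) := Set.accumulate U with hWdef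
      have hWopen : ∀ m, IsOpen (W m) := fun m => by
        rw [hWdef, Set.accumulate_def]
        exact isOpen_biUnion fun k _ => (hUp k).1
      have hWΩ : ∀ m, W m ⊆ Ω := fun m => by
        rw [hWdef, Set.accumulate_def]
        exact Set.iUnion₂_subset fun k _ => (hUp k).2.2
      have hWmono : Monotone W := Set.monotone_accumulate
      have hAW : ∀ m, A m ⊆ W m := fun m => (hUp m).2.1.trans Set.subset_accumulate
      have hWsucc : ∀ m, W (m+1) = W m ∪ U (m+1) := by
        intro m
        rw [hWdef]
        ext x
        simp only [Set.accumulate_def, Set.mem_iUnion, Set.mem_union, exists_prop]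
        constructor
        · rintro ⟨y, hy, hx⟩
          rcases Nat.lt_or_ge y (m+1) with h' | h'
          · exact Or.inl ⟨y, Nat.lt_succ_iff.1 h', hx⟩
          · have hyeq : y = m+1 := le_antisymm hy h'
            rw [hyeq] at hx
            exact Or.inr hx
        · rintro (⟨y, hy, hx⟩ | hx)
          · exact ⟨y, hy.trans (Nat.le_succ m), hx⟩
          · exact ⟨m+1, le_rfl, hx⟩
      have hWbound : ∀ m, relCapO p ϑ (W m) Ω ≤
          relCap p ϑ (A m) Ω + ∑ k ∈ Finset.range (m+1), e k := by
        intro m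
        induction m with
        | zero =>
          have hW0 : W 0 = U 0 := by
            rw [hWdef]
            ext x
            simp [Set.accumulate_def, Nat.le_zero]
          rw [hW0]
          simpa using hUcap 0
        | succ m ih =>
          have hstrong := capO_strong p ϑ hp hϑnn hϑm P hP1 hae1 haeP (W m) (U (m+1)) Ω
            (hWopen m) (hUp (m+1)).1
          have hinterO : IsOpen (W m ∩ U (m+1)) := (hWopen m).inter (hUp (m+1)).1
          have hAsub : A m ⊆ W m ∩ U (m+1) :=
            Set.subset_inter (hAW m) ((hinc m).trans (hUp (m+1)).2.1)
          have hint : relCap p ϑ (A m) Ω ≤ relCapO p ϑ (W m ∩ U (m+1)) Ω :=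
            cap_le_capO hinterO hAsub ((Set.inter_subset_left).trans (hWΩ m))
          have hchain : relCapO p ϑ (W (m+1)) Ω + relCap p ϑ (A m) Ω ≤
              (relCap p ϑ (A (m+1)) Ω + ∑ k ∈ Finset.range (m+2), e k) +
                relCap p ϑ (A m) Ω := by
            calc relCapO p ϑ (W (m+1)) Ω + relCap p ϑ (A m) Ω
                ≤ relCapO p ϑ (W m ∪ U (m+1)) Ω + relCapO p ϑ (W m ∩ U (m+1)) Ω := by
                  rw [hWsucc m]
                  exact add_le_add_right hint _
              _ ≤ relCapO p ϑ (W m) Ω + relCapO p ϑ (U (m+1)) Ω := hstrong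
              _ ≤ (relCap p ϑ (A m) Ω + ∑ k ∈ Finset.range (m+1), e k) +
                    (relCap p ϑ (A (m+1)) Ω + e (m+1)) := add_le_add ih (hUcap (m+1))
              _ = (relCap p ϑ (A (m+1)) Ω + ∑ k ∈ Finset.range (m+2), e k) +
                    relCap p ϑ (A m) Ω := by
                  rw [Finset.sum_range_succ e (m+1)]
                  ring
          exact (ENNReal.add_le_add_iff_right (hcapfin m)).1 hchain
      calc relCap p ϑ (⋃ m, A m) Ω ≤ relCapO p ϑ (⋃ m, W m) Ω :=
            cap_le_capO (isOpen_iUnion hWopen) (Set.iUnion_mono hAW)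
              (Set.iUnion_subset hWΩ)
        _ ≤ ⨆ m, relCapO p ϑ (W m) Ω := capO_iUnion_incr W hWopen hWmono
        _ ≤ ⨆ m, (relCap p ϑ (A m) Ω + (η:ℝ≥0∞)) :=
            iSup_mono fun m => (hWbound m).trans (add_le_add_right (hesum m) _)
        _ ≤ L + η :=
            iSup_le fun m => add_le_add_left (le_iSup (fun m => relCap p ϑ (A m) Ω) m) _
  rw [← hkey]
  exact tendsto_atTop_iSup hcapmono


end
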